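/- Let A be a block upper-triangular matrix algebra: every element of A has the form [[A₁₁, A₁₂],[0, A₂₂]] with A₁₁ of fixed size p×p. Let A₁ and A₂ be the algebras of all blocks A₁₁ and A₂₂, respectively, of elements of A. Then ℓ(A) ≤ ℓ(A₁) + ℓ(A₂) + 1. -/

import Mathlib

/-- Words in `S` of length at most `k` (the empty word gives the identity). -/
def wordsLe {F : Type*} [Field F] {m : Type*} [Fintype m] [DecidableEq m]
    (S : Set (Matrix m m F)) (k : ℕ) : Set (Matrix m m F) :=
  {M | ∃ l : List (Matrix m m F), l.length ≤ k ∧ (∀ a ∈ l, a ∈ S) ∧ M = l.prod}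

/-- The length of a generating set: the least `k` such that the span of words of
length at most `k` equals the unital subalgebra generated by `S`. -/
noncomputable def matLen (F : Type*) [Field F] {m : Type*} [Fintype m] [DecidableEq m]
    (S : Set (Matrix m m F)) : ℕ :=
  sInf {k | Submodule.span F (wordsLe S k) = Subalgebra.toSubmodule (Algebra.adjoin F S)}

/-- The length of a matrix algebra with carrier set `T`: the supremum of the lengths of
its generating subsets. -/
noncomputable def algLen (F : Type*) [Field F] {m : Type*} [Fintype m] [DecidableEq m]
    (T : Set (Matrix m m F)) : ℕ :=
  sSup {k | ∃ S : Set (Matrix m m F), (Algebra.adjoin F S : Set (Matrix m m F)) = T ∧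
    k = matLen F S}

open Submodule

section general
variable {F : Type*} [Field F] {m : Type*} [Fintype m] [DecidableEq m]
variable (S : Set (Matrix m m F))

lemma wordsLe_mono {k k' : ℕ} (h : k ≤ k') : wordsLe S k ⊆ wordsLe S k' :=
  fun _ ⟨l, hl, hmem, hprod⟩ => ⟨l, hl.trans h, hmem, hprod⟩

lemma one_mem_wordsLe (k : ℕ) : (1 : Matrix m m F) ∈ wordsLe S k :=
  ⟨[], by simp, by simp, by simp⟩

lemma wordsLe_subset_adjoin (k : ℕ) :
    wordsLe S k ⊆ (Algebra.adjoin F S : Set (Matrix m m F)) := by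
  rintro _ ⟨l, _, hmem, rfl⟩
  exact Subalgebra.list_prod_mem _ (fun a ha => Algebra.subset_adjoin (hmem a ha))

lemma span_wordsLe_le (k : ℕ) :
    span F (wordsLe S k) ≤ Subalgebra.toSubmodule (Algebra.adjoin F S) :=
  span_le.2 (wordsLe_subset_adjoin S k)

lemma wordsLe_mul {a b : ℕ} {x y : Matrix m m F} (hx : x ∈ wordsLe S a)
    (hy : y ∈ wordsLe S b) : x * y ∈ wordsLe S (a + b) := by
  obtain ⟨l₁, h1, h2, rfl⟩ := hx
  obtain ⟨l₂, g1, g2, rfl⟩ := hy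
  refine ⟨l₁ ++ l₂, by simpa using Nat.add_le_add h1 g1, ?_, (List.prod_append).symm⟩
  intro c hc
  rcases List.mem_append.1 hc with h | h
  exacts [h2 c h, g2 c h]

lemma mul_span_wordsLe {a : Matrix m m F} (ha : a ∈ S) {x : Matrix m m F} {k : ℕ}
    (hx : x ∈ span F (wordsLe S k)) : a * x ∈ span F (wordsLe S (k + 1)) := by
  have hmem : a * x ∈ Submodule.map (LinearMap.mulLeft F a) (span F (wordsLe S k)) :=
    ⟨x, hx, rfl⟩
  rw [Submodule.map_span] at hmem
  refine span_mono ?_ hmem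
  rintro _ ⟨w, hw, rfl⟩
  obtain ⟨l, h1, h2, rfl⟩ := hw
  refine ⟨a :: l, by simpa using h1, ?_, by simp⟩
  intro c hc
  rcases List.mem_cons.1 hc with rfl | h
  exacts [ha, h2 c h]

lemma span_stab {k : ℕ} (h : span F (wordsLe S (k + 1)) ≤ span F (wordsLe S k)) :
    ∀ j, span F (wordsLe S (k + j)) = span F (wordsLe S k) := by
  intro j
  induction j with
  | zero => rfl
  | succ j ih =>
    refine le_antisymm ?_ (span_mono (wordsLe_mono S (by omega)))
    refine span_le.2 ?_
    rintro _ ⟨l, h1, h2, rfl⟩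
    match l with
    | [] => simpa using subset_span (one_mem_wordsLe S k)
    | a :: t =>
      have ht : t.prod ∈ span F (wordsLe S (k + j)) :=
        subset_span ⟨t, by simp at h1; omega,
          fun c hc => h2 c (List.mem_cons_of_mem _ hc), rfl⟩
      rw [ih] at ht
      have hm := mul_span_wordsLe S (h2 a (List.mem_cons_self)) ht
      rw [List.prod_cons]
      exact h hm

lemma span_eq_adjoin_of_stab {k : ℕ}
    (h : ∀ j, span F (wordsLe S (k + j)) = span F (wordsLe S k)) :
    span F (wordsLe S k) = Subalgebra.toSubmodule (Algebra.adjoin F S) := by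
  refine le_antisymm (span_wordsLe_le S k) ?_
  rw [Algebra.adjoin_eq_span]
  refine span_le.2 ?_
  intro x hx
  obtain ⟨l, h1, h2⟩ := Submonoid.exists_list_of_mem_closure hx
  have hx' : x ∈ span F (wordsLe S (k + l.length)) :=
    subset_span ⟨l, by omega, h1, h2.symm⟩
  rwa [h l.length] at hx'

lemma exists_stab : ∃ k ≤ Module.finrank F (Matrix m m F),
    span F (wordsLe S (k + 1)) ≤ span F (wordsLe S k) := by
  by_contra hc
  push_neg at hc
  have key : ∀ k, k ≤ Module.finrank F (Matrix m m F) + 1 →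
      k ≤ Module.finrank F ↥(span F (wordsLe S k)) := by
    intro k
    induction k with
    | zero => intro _; exact Nat.zero_le _
    | succ k ih =>
      intro hk
      have h1 := ih (by omega)
      have hne : span F (wordsLe S (k + 1)) ≠ span F (wordsLe S k) := by
        intro he
        exact hc k (by omega) he.le
      have hlt : span F (wordsLe S k) < span F (wordsLe S (k + 1)) :=
        lt_of_le_of_ne (span_mono (wordsLe_mono S (Nat.le_succ k))) (fun he => hne he.symm)
      have h2 := Submodule.finrank_lt_finrank_of_lt hlt
      omega
  have h3 := key _ le_rfl
  have h4 : Module.finrank F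
      ↥(span F (wordsLe S (Module.finrank F (Matrix m m F) + 1))) ≤
      Module.finrank F (Matrix m m F) := Submodule.finrank_le _
  omega

lemma span_finrank_eq_adjoin :
    span F (wordsLe S (Module.finrank F (Matrix m m F))) =
      Subalgebra.toSubmodule (Algebra.adjoin F S) := by
  obtain ⟨k, hk, hstab⟩ := exists_stab S
  have h := span_stab S hstab
  have hadj := span_eq_adjoin_of_stab S h
  have heq : span F (wordsLe S (Module.finrank F (Matrix m m F))) =
      span F (wordsLe S k) := by
    have h2 := h (Module.finrank F (Matrix m m F) - k)
    rwa [show k + (Module.finrank F (Matrix m m F) - k) =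
      Module.finrank F (Matrix m m F) from by omega] at h2
  rw [heq, hadj]

lemma matLen_le_finrank : matLen F S ≤ Module.finrank F (Matrix m m F) :=
  Nat.sInf_le (span_finrank_eq_adjoin S)

lemma matLen_spec :
    span F (wordsLe S (matLen F S)) = Subalgebra.toSubmodule (Algebra.adjoin F S) := by
  have h : {k | span F (wordsLe S k) =
      Subalgebra.toSubmodule (Algebra.adjoin F S)}.Nonempty :=
    ⟨_, span_finrank_eq_adjoin S⟩
  exact Nat.sInf_mem h

end general

section blocks
variable {F : Type*} [Field F] {p q : ℕ}

/-- Block upper triangular matrices. -/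
def BT (F : Type*) [Field F] (p q : ℕ) :
    Set (Matrix (Fin p ⊕ Fin q) (Fin p ⊕ Fin q) F) :=
  {M | ∀ (i : Fin q) (j : Fin p), M (Sum.inr i) (Sum.inl j) = 0}

lemma BT_mul {M N : Matrix (Fin p ⊕ Fin q) (Fin p ⊕ Fin q) F}
    (hM : M ∈ BT F p q) (hN : N ∈ BT F p q) : M * N ∈ BT F p q := by
  intro i j
  rw [Matrix.mul_apply, Fintype.sum_sum_type]
  simp [hM i, fun b => hN b j]

/-- Block upper triangular matrices as a subalgebra. -/
def BTalg (F : Type*) [Field F] (p q : ℕ) :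
    Subalgebra F (Matrix (Fin p ⊕ Fin q) (Fin p ⊕ Fin q) F) where
  carrier := BT F p q
  mul_mem' := BT_mul
  add_mem' := fun ha hb i j => by simp [Matrix.add_apply, ha i j, hb i j]
  algebraMap_mem' := fun r i j => by
    simp [Matrix.algebraMap_matrix_apply]

lemma BT_one : (1 : Matrix (Fin p ⊕ Fin q) (Fin p ⊕ Fin q) F) ∈ BT F p q :=
  (BTalg F p q).one_mem

lemma BT_prod {l : List (Matrix (Fin p ⊕ Fin q) (Fin p ⊕ Fin q) F)}
    (h : ∀ a ∈ l, a ∈ BT F p q) : l.prod ∈ BT F p q := by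
  induction l with
  | nil => simpa using BT_one
  | cons a t ih =>
    rw [List.prod_cons]
    exact BT_mul (h a (List.mem_cons_self)) (ih fun c hc => h c (List.mem_cons_of_mem _ hc))

/-- Top-left block as a linear map. -/
def blk₁ (F : Type*) [Field F] (p q : ℕ) :
    Matrix (Fin p ⊕ Fin q) (Fin p ⊕ Fin q) F →ₗ[F] Matrix (Fin p) (Fin p) F where
  toFun M := M.submatrix Sum.inl Sum.inl
  map_add' _ _ := rfl
  map_smul' _ _ := rfl

/-- Bottom-right block as a linear map. -/
def blk₂ (F : Type*) [Field F] (p q : ℕ) :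
    Matrix (Fin p ⊕ Fin q) (Fin p ⊕ Fin q) F →ₗ[F] Matrix (Fin q) (Fin q) F where
  toFun M := M.submatrix Sum.inr Sum.inr
  map_add' _ _ := rfl
  map_smul' _ _ := rfl

lemma blk₁_mul {M N : Matrix (Fin p ⊕ Fin q) (Fin p ⊕ Fin q) F} (hN : N ∈ BT F p q) :
    blk₁ F p q (M * N) = blk₁ F p q M * blk₁ F p q N := by
  ext i j
  show (M * N) (Sum.inl i) (Sum.inl j) = _
  rw [Matrix.mul_apply, Fintype.sum_sum_type, Matrix.mul_apply]
  simp [blk₁, fun b => hN b j]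
  rfl

lemma blk₂_mul {M N : Matrix (Fin p ⊕ Fin q) (Fin p ⊕ Fin q) F} (hM : M ∈ BT F p q) :
    blk₂ F p q (M * N) = blk₂ F p q M * blk₂ F p q N := by
  ext i j
  show (M * N) (Sum.inr i) (Sum.inr j) = _
  rw [Matrix.mul_apply, Fintype.sum_sum_type, Matrix.mul_apply]
  simp [blk₂, hM i]
  rfl

lemma blk₁_one : blk₁ F p q 1 = 1 :=
  Matrix.submatrix_one _ Sum.inl_injective

lemma blk₂_one : blk₂ F p q 1 = 1 :=
  Matrix.submatrix_one _ Sum.inr_injective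

lemma blk₁_algebraMap (r : F) :
    blk₁ F p q (algebraMap F _ r) = algebraMap F (Matrix (Fin p) (Fin p) F) r := by
  rw [Algebra.algebraMap_eq_smul_one, Algebra.algebraMap_eq_smul_one, map_smul, blk₁_one]

lemma blk₂_algebraMap (r : F) :
    blk₂ F p q (algebraMap F _ r) = algebraMap F (Matrix (Fin q) (Fin q) F) r := by
  rw [Algebra.algebraMap_eq_smul_one, Algebra.algebraMap_eq_smul_one, map_smul, blk₂_one]

lemma blk₁_prod {l : List (Matrix (Fin p ⊕ Fin q) (Fin p ⊕ Fin q) F)}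
    (h : ∀ a ∈ l, a ∈ BT F p q) : blk₁ F p q l.prod = (l.map (blk₁ F p q)).prod := by
  induction l with
  | nil => simpa using blk₁_one
  | cons a t ih =>
    rw [List.prod_cons, blk₁_mul (BT_prod fun c hc => h c (List.mem_cons_of_mem _ hc)),
      List.map_cons, List.prod_cons, ih fun c hc => h c (List.mem_cons_of_mem _ hc)]

lemma blk₂_prod {l : List (Matrix (Fin p ⊕ Fin q) (Fin p ⊕ Fin q) F)}
    (h : ∀ a ∈ l, a ∈ BT F p q) : blk₂ F p q l.prod = (l.map (blk₂ F p q)).prod := by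
  induction l with
  | nil => simpa using blk₂_one
  | cons a t ih =>
    rw [List.prod_cons, blk₂_mul (h a (List.mem_cons_self)),
      List.map_cons, List.prod_cons, ih fun c hc => h c (List.mem_cons_of_mem _ hc)]

lemma key_prod_zero {X Y : Matrix (Fin p ⊕ Fin q) (Fin p ⊕ Fin q) F}
    (hX : X ∈ BT F p q) (hY : Y ∈ BT F p q)
    (h1 : blk₁ F p q X = 0) (h2 : blk₂ F p q Y = 0) : X * Y = 0 := by
  have hXl : ∀ a c, X a (Sum.inl c) = 0 := by
    rintro (a | a) c
    · exact congrFun (congrFun h1 a) c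
    · exact hX a c
  have hYr : ∀ c b, Y (Sum.inr c) b = 0 := by
    rintro c (b | b)
    · exact hY c b
    · exact congrFun (congrFun h2 c) b
  ext a b
  rw [Matrix.mul_apply, Fintype.sum_sum_type]
  simp [fun k => hXl a k, fun k => hYr k b]

end blocks

section main
variable {F : Type*} [Field F] {p q : ℕ}

/-- The image of a block-triangular subalgebra under `blk₁` is a subalgebra. -/
def blockSub₁ (𝒜 : Subalgebra F (Matrix (Fin p ⊕ Fin q) (Fin p ⊕ Fin q) F))
    (h : (𝒜 : Set _) ⊆ BT F p q) : Subalgebra F (Matrix (Fin p) (Fin p) F) where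
  carrier := blk₁ F p q '' (𝒜 : Set _)
  add_mem' := by
    rintro _ _ ⟨a, ha, rfl⟩ ⟨b, hb, rfl⟩
    exact ⟨a + b, add_mem ha hb, map_add _ _ _⟩
  mul_mem' := by
    rintro _ _ ⟨a, ha, rfl⟩ ⟨b, hb, rfl⟩
    exact ⟨a * b, mul_mem ha hb, blk₁_mul (h hb)⟩
  algebraMap_mem' := fun r => ⟨algebraMap F _ r, algebraMap_mem _ r, blk₁_algebraMap r⟩

def blockSub₂ (𝒜 : Subalgebra F (Matrix (Fin p ⊕ Fin q) (Fin p ⊕ Fin q) F))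
    (h : (𝒜 : Set _) ⊆ BT F p q) : Subalgebra F (Matrix (Fin q) (Fin q) F) where
  carrier := blk₂ F p q '' (𝒜 : Set _)
  add_mem' := by
    rintro _ _ ⟨a, ha, rfl⟩ ⟨b, hb, rfl⟩
    exact ⟨a + b, add_mem ha hb, map_add _ _ _⟩
  mul_mem' := by
    rintro _ _ ⟨a, ha, rfl⟩ ⟨b, hb, rfl⟩
    exact ⟨a * b, mul_mem ha hb, blk₂_mul (h ha)⟩
  algebraMap_mem' := fun r => ⟨algebraMap F _ r, algebraMap_mem _ r, blk₂_algebraMap r⟩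

lemma adjoin_image₁ (𝒜 : Subalgebra F (Matrix (Fin p ⊕ Fin q) (Fin p ⊕ Fin q) F))
    (h : (𝒜 : Set _) ⊆ BT F p q) (S : Set (Matrix (Fin p ⊕ Fin q) (Fin p ⊕ Fin q) F))
    (hS : (Algebra.adjoin F S : Set _) = SetLike.coe 𝒜) :
    (Algebra.adjoin F (blk₁ F p q '' S) : Set _) = blk₁ F p q '' (𝒜 : Set _) := by
  have hmemBT : ∀ z, z ∈ Algebra.adjoin F S → z ∈ BT F p q := by
    intro z hz
    apply h
    rw [← hS]
    exact hz
  apply Set.Subset.antisymm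
  · have hle : Algebra.adjoin F (blk₁ F p q '' S) ≤ blockSub₁ 𝒜 h := by
      apply Algebra.adjoin_le
      rintro _ ⟨s, hs, rfl⟩
      exact ⟨s, by rw [← hS]; exact Algebra.subset_adjoin hs, rfl⟩
    exact hle
  · rintro _ ⟨a, ha, rfl⟩
    rw [← hS] at ha
    have ha' : a ∈ Algebra.adjoin F S := ha
    clear ha
    induction ha' using Algebra.adjoin_induction with
    | mem x hx => exact Algebra.subset_adjoin ⟨x, hx, rfl⟩
    | algebraMap r => rw [blk₁_algebraMap]; exact algebraMap_mem _ r
    | add x y hx hy ihx ihy => rw [map_add]; exact add_mem ihx ihy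
    | mul x y hx hy ihx ihy =>
      rw [blk₁_mul (hmemBT y hy)]
      exact mul_mem ihx ihy

lemma adjoin_image₂ (𝒜 : Subalgebra F (Matrix (Fin p ⊕ Fin q) (Fin p ⊕ Fin q) F))
    (h : (𝒜 : Set _) ⊆ BT F p q) (S : Set (Matrix (Fin p ⊕ Fin q) (Fin p ⊕ Fin q) F))
    (hS : (Algebra.adjoin F S : Set _) = SetLike.coe 𝒜) :
    (Algebra.adjoin F (blk₂ F p q '' S) : Set _) = blk₂ F p q '' (𝒜 : Set _) := by
  have hmemBT : ∀ z, z ∈ Algebra.adjoin F S → z ∈ BT F p q := by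
    intro z hz
    apply h
    rw [← hS]
    exact hz
  apply Set.Subset.antisymm
  · have hle : Algebra.adjoin F (blk₂ F p q '' S) ≤ blockSub₂ 𝒜 h := by
      apply Algebra.adjoin_le
      rintro _ ⟨s, hs, rfl⟩
      exact ⟨s, by rw [← hS]; exact Algebra.subset_adjoin hs, rfl⟩
    exact hle
  · rintro _ ⟨a, ha, rfl⟩
    rw [← hS] at ha
    have ha' : a ∈ Algebra.adjoin F S := ha
    clear ha
    induction ha' using Algebra.adjoin_induction with
    | mem x hx => exact Algebra.subset_adjoin ⟨x, hx, rfl⟩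
    | algebraMap r => rw [blk₂_algebraMap]; exact algebraMap_mem _ r
    | add x y hx hy ihx ihy => rw [map_add]; exact add_mem ihx ihy
    | mul x y hx hy ihx ihy =>
      rw [blk₂_mul (hmemBT x hx)]
      exact mul_mem ihx ihy

lemma exists_preimage_list {α : Type*} {S : Set (Matrix (Fin p ⊕ Fin q) (Fin p ⊕ Fin q) F)}
    (f : Matrix (Fin p ⊕ Fin q) (Fin p ⊕ Fin q) F → α) :
    ∀ l : List α, (∀ a ∈ l, a ∈ f '' S) →
      ∃ l' : List (Matrix (Fin p ⊕ Fin q) (Fin p ⊕ Fin q) F),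
        l'.length = l.length ∧ (∀ a ∈ l', a ∈ S) ∧ l'.map f = l
  | [], _ => ⟨[], rfl, by simp, rfl⟩
  | a :: t, h => by
    obtain ⟨s, hs, rfl⟩ := h a (List.mem_cons_self)
    obtain ⟨t', ht1, ht2, ht3⟩ :=
      exists_preimage_list f t (fun c hc => h c (List.mem_cons_of_mem _ hc))
    refine ⟨s :: t', by simp [ht1], ?_, by simp [ht3]⟩
    rintro c hc
    rcases List.mem_cons.1 hc with rfl | hc
    exacts [hs, ht2 c hc]

lemma wordsLe_image₁ {S : Set (Matrix (Fin p ⊕ Fin q) (Fin p ⊕ Fin q) F)}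
    (hS : S ⊆ BT F p q) (k : ℕ) :
    wordsLe (blk₁ F p q '' S) k ⊆ blk₁ F p q '' (wordsLe S k) := by
  rintro _ ⟨l, h1, h2, rfl⟩
  obtain ⟨l', hl1, hl2, hl3⟩ := exists_preimage_list (blk₁ F p q) l h2
  refine ⟨l'.prod, ⟨l', by omega, hl2, rfl⟩, ?_⟩
  rw [blk₁_prod (fun c hc => hS (hl2 c hc)), hl3]

lemma wordsLe_image₂ {S : Set (Matrix (Fin p ⊕ Fin q) (Fin p ⊕ Fin q) F)}
    (hS : S ⊆ BT F p q) (k : ℕ) :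
    wordsLe (blk₂ F p q '' S) k ⊆ blk₂ F p q '' (wordsLe S k) := by
  rintro _ ⟨l, h1, h2, rfl⟩
  obtain ⟨l', hl1, hl2, hl3⟩ := exists_preimage_list (blk₂ F p q) l h2
  refine ⟨l'.prod, ⟨l', by omega, hl2, rfl⟩, ?_⟩
  rw [blk₂_prod (fun c hc => hS (hl2 c hc)), hl3]

end main

section core
variable {F : Type*} [Field F] {p q : ℕ}

lemma matLen_le_main {S : Set (Matrix (Fin p ⊕ Fin q) (Fin p ⊕ Fin q) F)}
    (hSBT : S ⊆ BT F p q) :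
    matLen F S ≤ matLen F (blk₁ F p q '' S) + matLen F (blk₂ F p q '' S) + 1 := by
  have hspanBT : ∀ (k : ℕ) (z), z ∈ span F (wordsLe S k) → z ∈ BT F p q := by
    intro k z hz
    have h1 := span_wordsLe_le S k hz
    exact Algebra.adjoin_le (show S ⊆ (BTalg F p q : Set _) from hSBT) h1
  set k₁ := matLen F (⇑(blk₁ F p q) '' S) with hk₁
  set k₂ := matLen F (⇑(blk₂ F p q) '' S) with hk₂
  have hW₁ := matLen_spec (⇑(blk₁ F p q) '' S)
  have hW₂ := matLen_spec (⇑(blk₂ F p q) '' S)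
  set N := k₁ + k₂ + 1 with hN
  set V := span F (wordsLe S N) with hV
  have mulmem : ∀ (a b : ℕ) (x y : Matrix (Fin p ⊕ Fin q) (Fin p ⊕ Fin q) F),
      x ∈ span F (wordsLe S a) → y ∈ span F (wordsLe S b) → a + b ≤ N → x * y ∈ V := by
    intro a b x y hx hy hab
    have h1 : x * y ∈ span F (wordsLe S a) * span F (wordsLe S b) :=
      Submodule.mul_mem_mul hx hy
    rw [Submodule.span_mul_span] at h1
    refine span_mono ?_ h1
    rintro _ ⟨x', hx', y', hy', rfl⟩
    exact wordsLe_mono S hab (wordsLe_mul S hx' hy')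
  have stepA : wordsLe S (N + 1) ⊆ (V : Set _) := by
    rintro _ ⟨l, hlen, hmem, rfl⟩
    set u := l.take (k₁ + 1) with hu_def
    set v := l.drop (k₁ + 1) with hv_def
    have hu : ∀ a ∈ u, a ∈ S := fun a ha => hmem a (List.mem_of_mem_take ha)
    have hv : ∀ a ∈ v, a ∈ S := fun a ha => hmem a (List.mem_of_mem_drop ha)
    have hul : u.length ≤ k₁ + 1 := by simp [hu_def]
    have hvl : v.length ≤ k₂ + 1 := by simp [hv_def]; omega
    have hprod : l.prod = u.prod * v.prod := by
      rw [← List.prod_append, List.take_append_drop]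
    have hπ₁U : blk₁ F p q u.prod ∈ span F (wordsLe (⇑(blk₁ F p q) '' S) k₁) := by
      rw [hW₁]
      show blk₁ F p q u.prod ∈ Algebra.adjoin F (⇑(blk₁ F p q) '' S)
      rw [blk₁_prod (fun a ha => hSBT (hu a ha))]
      refine Subalgebra.list_prod_mem _ ?_
      intro x hx
      obtain ⟨a, ha, rfl⟩ := List.mem_map.1 hx
      exact Algebra.subset_adjoin ⟨a, hu a ha, rfl⟩
    have hmap₁ : blk₁ F p q u.prod ∈ Submodule.map (blk₁ F p q) (span F (wordsLe S k₁)) := by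
      rw [Submodule.map_span]
      exact span_mono (wordsLe_image₁ hSBT k₁) hπ₁U
    obtain ⟨U', hU'mem, hU'⟩ := hmap₁
    have hπ₂V : blk₂ F p q v.prod ∈ span F (wordsLe (⇑(blk₂ F p q) '' S) k₂) := by
      rw [hW₂]
      show blk₂ F p q v.prod ∈ Algebra.adjoin F (⇑(blk₂ F p q) '' S)
      rw [blk₂_prod (fun a ha => hSBT (hv a ha))]
      refine Subalgebra.list_prod_mem _ ?_
      intro x hx
      obtain ⟨a, ha, rfl⟩ := List.mem_map.1 hx
      exact Algebra.subset_adjoin ⟨a, hv a ha, rfl⟩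
    have hmap₂ : blk₂ F p q v.prod ∈ Submodule.map (blk₂ F p q) (span F (wordsLe S k₂)) := by
      rw [Submodule.map_span]
      exact span_mono (wordsLe_image₂ hSBT k₂) hπ₂V
    obtain ⟨V', hV'mem, hV'⟩ := hmap₂
    have hupBT : u.prod ∈ BT F p q := BT_prod (fun a ha => hSBT (hu a ha))
    have hvpBT : v.prod ∈ BT F p q := BT_prod (fun a ha => hSBT (hv a ha))
    have hXBT : u.prod - U' ∈ BT F p q := by
      intro i j
      have h2 : U' ∈ BT F p q := hspanBT _ _ hU'mem
      simp [Matrix.sub_apply, hupBT i j, h2 i j]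
    have hYBT : v.prod - V' ∈ BT F p q := by
      intro i j
      have h2 : V' ∈ BT F p q := hspanBT _ _ hV'mem
      simp [Matrix.sub_apply, hvpBT i j, h2 i j]
    have hX0 : blk₁ F p q (u.prod - U') = 0 := by rw [map_sub, hU', sub_self]
    have hY0 : blk₂ F p q (v.prod - V') = 0 := by rw [map_sub, hV', sub_self]
    have hXY : (u.prod - U') * (v.prod - V') = 0 := key_prod_zero hXBT hYBT hX0 hY0
    have hupmem : u.prod ∈ span F (wordsLe S (k₁ + 1)) := subset_span ⟨u, hul, hu, rfl⟩
    have hvpmem : v.prod ∈ span F (wordsLe S (k₂ + 1)) := subset_span ⟨v, hvl, hv, rfl⟩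
    have m1 : U' * V' ∈ V := mulmem k₁ k₂ _ _ hU'mem hV'mem (by omega)
    have m2 : U' * v.prod ∈ V := mulmem k₁ (k₂ + 1) _ _ hU'mem hvpmem (by omega)
    have m3 : u.prod * V' ∈ V := mulmem (k₁ + 1) k₂ _ _ hupmem hV'mem (by omega)
    have hexpand : u.prod * v.prod =
        U' * V' + (U' * (v.prod - V') +
          ((u.prod - U') * V' + (u.prod - U') * (v.prod - V'))) := by
      noncomm_ring
    show l.prod ∈ V
    rw [hprod, hexpand, hXY, add_zero]
    refine add_mem m1 (add_mem ?_ ?_)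
    · rw [mul_sub]
      exact sub_mem m2 m1
    · rw [sub_mul]
      exact sub_mem m3 m1
  have stepB : ∀ j, wordsLe S (N + j) ⊆ (V : Set _) := by
    intro j
    induction j with
    | zero => exact subset_span
    | succ j ih =>
      rintro _ ⟨l, hlen, hmem, rfl⟩
      match l with
      | [] => simpa using subset_span (one_mem_wordsLe S N)
      | a :: t =>
        have ht : t.prod ∈ V := ih ⟨t, by simp at hlen; omega,
          fun c hc => hmem c (List.mem_cons_of_mem _ hc), rfl⟩
        have hm := mul_span_wordsLe S (hmem a (List.mem_cons_self)) ht
        rw [List.prod_cons]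
        exact span_le.2 stepA hm
  have hVeq : V = Subalgebra.toSubmodule (Algebra.adjoin F S) := by
    refine le_antisymm (span_wordsLe_le S N) ?_
    rw [Algebra.adjoin_eq_span]
    refine span_le.2 ?_
    intro x hx
    obtain ⟨l, h1, h2⟩ := Submonoid.exists_list_of_mem_closure hx
    exact stepB l.length ⟨l, by omega, h1, h2.symm⟩
  exact Nat.sInf_le hVeq

end core


/-- Lemma of Markova: for a block upper-triangular matrix algebra `𝒜`,
`ℓ(𝒜) ≤ ℓ(𝒜₁) + ℓ(𝒜₂) + 1` where `𝒜₁, 𝒜₂` are the algebras of diagonal blocks. -/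
theorem stmt_15 {F : Type*} [Field F] {p q : ℕ}
    (𝒜 : Subalgebra F (Matrix (Fin p ⊕ Fin q) (Fin p ⊕ Fin q) F))
    (hblock : ∀ A ∈ 𝒜, ∀ (i : Fin q) (j : Fin p), A (Sum.inr i) (Sum.inl j) = 0) :
    algLen F (𝒜 : Set (Matrix (Fin p ⊕ Fin q) (Fin p ⊕ Fin q) F)) ≤
      algLen F ((fun A : Matrix (Fin p ⊕ Fin q) (Fin p ⊕ Fin q) F =>
          A.submatrix Sum.inl Sum.inl) '' 𝒜) +
        algLen F ((fun A : Matrix (Fin p ⊕ Fin q) (Fin p ⊕ Fin q) F =>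
          A.submatrix Sum.inr Sum.inr) '' 𝒜) + 1 := by
  have h𝒜BT : (𝒜 : Set (Matrix (Fin p ⊕ Fin q) (Fin p ⊕ Fin q) F)) ⊆ BT F p q :=
    fun A hA i j => hblock A hA i j
  have hco₁ : (fun A : Matrix (Fin p ⊕ Fin q) (Fin p ⊕ Fin q) F =>
      A.submatrix Sum.inl Sum.inl) = ⇑(blk₁ F p q) := rfl
  have hco₂ : (fun A : Matrix (Fin p ⊕ Fin q) (Fin p ⊕ Fin q) F =>
      A.submatrix Sum.inr Sum.inr) = ⇑(blk₂ F p q) := rfl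
  rw [hco₁, hco₂]
  set R := algLen F (⇑(blk₁ F p q) '' (𝒜 : Set _)) +
    algLen F (⇑(blk₂ F p q) '' (𝒜 : Set _)) + 1 with hR
  have hbound : ∀ k ∈ {k | ∃ S : Set (Matrix (Fin p ⊕ Fin q) (Fin p ⊕ Fin q) F),
      (Algebra.adjoin F S : Set (Matrix (Fin p ⊕ Fin q) (Fin p ⊕ Fin q) F)) =
        (𝒜 : Set _) ∧ k = matLen F S}, k ≤ R := by
    rintro k ⟨S, hgen, rfl⟩
    have hSBT : S ⊆ BT F p q := fun s hs =>
      h𝒜BT (by rw [← hgen]; exact Algebra.subset_adjoin hs)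
    have h1 := matLen_le_main hSBT
    have hm₁ : matLen F (⇑(blk₁ F p q) '' S) ≤ algLen F (⇑(blk₁ F p q) '' (𝒜 : Set _)) := by
      apply le_csSup
      · refine ⟨Module.finrank F (Matrix (Fin p) (Fin p) F), ?_⟩
        rintro k ⟨S', _, rfl⟩
        exact matLen_le_finrank S'
      · exact ⟨⇑(blk₁ F p q) '' S, adjoin_image₁ 𝒜 h𝒜BT S hgen, rfl⟩
    have hm₂ : matLen F (⇑(blk₂ F p q) '' S) ≤ algLen F (⇑(blk₂ F p q) '' (𝒜 : Set _)) := by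
      apply le_csSup
      · refine ⟨Module.finrank F (Matrix (Fin q) (Fin q) F), ?_⟩
        rintro k ⟨S', _, rfl⟩
        exact matLen_le_finrank S'
      · exact ⟨⇑(blk₂ F p q) '' S, adjoin_image₂ 𝒜 h𝒜BT S hgen, rfl⟩
    omega
  show sSup {k | ∃ S : Set (Matrix (Fin p ⊕ Fin q) (Fin p ⊕ Fin q) F),
      (Algebra.adjoin F S : Set (Matrix (Fin p ⊕ Fin q) (Fin p ⊕ Fin q) F)) =
        (𝒜 : Set _) ∧ k = matLen F S} ≤ R
  rcases Set.eq_empty_or_nonempty {k | ∃ S : Set (Matrix (Fin p ⊕ Fin q) (Fin p ⊕ Fin q) F),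
      (Algebra.adjoin F S : Set (Matrix (Fin p ⊕ Fin q) (Fin p ⊕ Fin q) F)) =
        (𝒜 : Set _) ∧ k = matLen F S} with he | hne
  · rw [he, csSup_empty]
    exact Nat.zero_le _
  · exact csSup_le hne hbound
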